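/- Let G be a graph with n − 1 ≥ 2 vertices. Then N(P_{(Ĝ)^}) = N(P_{Ĝ}) + 2^n, where Ĝ is the suspension of G and (Ĝ)^ is the suspension of Ĝ. -/

import Mathlib

open Finset

/-- The symmetric edge polytope of a finite simple graph `G`: the convex hull of the
vectors `e_i - e_j` for all adjacent pairs `i, j`. -/
def symEdgePolytope {V : Type*} [DecidableEq V] (G : SimpleGraph V) : Set (V → ℝ) :=
  convexHull ℝ {x : V → ℝ | ∃ i j : V, G.Adj i j ∧
    x = fun k => (if k = i then (1 : ℝ) else 0) - (if k = j then (1 : ℝ) else 0)}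

/-- A facet of a polytope `P`: a maximal proper (exposed) face of `P`. -/
def IsFacet {V : Type*} (P F : Set (V → ℝ)) : Prop :=
  IsExposed ℝ P F ∧ F ≠ P ∧
    ∀ F' : Set (V → ℝ), IsExposed ℝ P F' → F' ≠ P → F ⊆ F' → F' = F

/-- `N(P)`: the number of facets of a polytope `P`. -/
noncomputable def numFacets {V : Type*} (P : Set (V → ℝ)) : ℕ :=
  Set.ncard {F : Set (V → ℝ) | IsFacet P F}

/-- The suspension `Ĝ` of a graph `G`: a new apex vertex (`none`) is joined to all
vertices of `G`. -/
def suspension {V : Type*} (G : SimpleGraph V) : SimpleGraph (Option V) where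
  Adj x y :=
    match x, y with
    | some a, some b => G.Adj a b
    | some _, none => True
    | none, some _ => True
    | none, none => False
  symm := by
    constructor
    rintro (_ | a) (_ | b) h
    · exact h
    · trivial
    · trivial
    · exact h.symm
  loopless := by
    constructor
    rintro (_ | a) h
    · exact h
    · exact G.loopless.irrefl a h

set_option linter.unusedSectionVars false
set_option linter.unusedVariables false
set_option maxHeartbeats 1000000


section Aux
variable {E : Type*} [NormedAddCommGroup E] [NormedSpace ℝ E]

theorem hull_le {S : Set E} {l : E →L[ℝ] ℝ} {M : ℝ} (h : ∀ s ∈ S, l s ≤ M) :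
    ∀ x ∈ convexHull ℝ S, l x ≤ M := by
  intro x hx
  have hsub : convexHull ℝ S ⊆ {x | l x ≤ M} :=
    convexHull_min h (convex_halfSpace_le (l.toLinearMap.isLinear) M)
  exact hsub hx

theorem hull_eq_const {S : Set E} {l : E →L[ℝ] ℝ} {M : ℝ} (h : ∀ s ∈ S, l s = M) :
    ∀ x ∈ convexHull ℝ S, l x = M := by
  intro x hx
  have hsub : convexHull ℝ S ⊆ {x | l x = M} :=
    convexHull_min h (convex_hyperplane (l.toLinearMap.isLinear) M)
  exact hsub hx

/-- The exposed face of a convex hull in direction `l` is the hull of the maximizers. -/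
theorem face_hull_eq {S : Set E} {l : E →L[ℝ] ℝ} {M : ℝ}
    (hub : ∀ s ∈ S, l s ≤ M) (hmem : ∃ s ∈ S, l s = M) :
    {x ∈ convexHull ℝ S | ∀ y ∈ convexHull ℝ S, l y ≤ l x}
      = convexHull ℝ {s ∈ S | l s = M} := by
  apply Set.Subset.antisymm
  · rintro x ⟨hxh, hmax⟩
    obtain ⟨s₀, hs₀S, hs₀M⟩ := hmem
    have hxM : l x = M := by
      refine le_antisymm (hull_le hub x hxh) ?_
      have := hmax s₀ (subset_convexHull ℝ S hs₀S)
      linarith [hs₀M ▸ this]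
    rw [_root_.convexHull_eq] at hxh
    obtain ⟨κ, t, w, z, hw0, hw1, hzS, hx⟩ := hxh
    have hsum : ∑ i ∈ t, w i * l (z i) = M := by
      have h1 : l x = ∑ i ∈ t, w i * l (z i) := by
        rw [← hx, Finset.centerMass, hw1, inv_one, one_smul, map_sum]
        simp [mul_comm]
      rw [← h1, hxM]
    have key : ∀ i ∈ t, w i ≠ 0 → l (z i) = M := by
      by_contra hcon
      push_neg at hcon
      obtain ⟨i₀, hi₀t, hwne, hne⟩ := hcon
      have hlt : l (z i₀) < M := lt_of_le_of_ne (hub _ (hzS _ hi₀t)) hne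
      have hstrict : ∑ i ∈ t, w i * l (z i) < ∑ i ∈ t, w i * M := by
        refine Finset.sum_lt_sum (fun i hi => mul_le_mul_of_nonneg_left (hub _ (hzS _ hi)) (hw0 _ hi)) ⟨i₀, hi₀t, ?_⟩
        exact mul_lt_mul_of_pos_left hlt (lt_of_le_of_ne (hw0 _ hi₀t) (Ne.symm hwne))
      rw [← Finset.sum_mul, hw1, one_mul, hsum] at hstrict
      exact lt_irrefl _ hstrict
    rw [← hx, ← Finset.centerMass_filter_ne_zero]
    refine Finset.centerMass_mem_convexHull _ (fun i hi => hw0 i (Finset.mem_filter.1 hi).1) ?_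
      (fun i hi => ⟨hzS _ (Finset.mem_filter.1 hi).1, key _ (Finset.mem_filter.1 hi).1 (Finset.mem_filter.1 hi).2⟩)
    rw [Finset.sum_filter_ne_zero, hw1]
    exact one_pos
  · intro x hx
    have hxS : x ∈ convexHull ℝ S := convexHull_mono (Set.sep_subset _ _) hx
    have hxM : l x = M := hull_eq_const (fun s hs => hs.2) x hx
    refine ⟨hxS, fun y hy => ?_⟩
    rw [hxM]
    exact hull_le hub y hy

end Aux

section Defs
variable {ι : Type*} [Fintype ι] [DecidableEq ι]

/-- `e_i - e_j` as a vector. -/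
def esub (i j : ι) : ι → ℝ := fun k => (if k = i then (1 : ℝ) else 0) - (if k = j then (1 : ℝ) else 0)

/-- the vertex candidates of the symmetric edge polytope -/
def vset (K : SimpleGraph ι) : Set (ι → ℝ) := {x | ∃ i j : ι, K.Adj i j ∧ x = esub i j}

/-- the linear functional `x ↦ ∑ f v * x v`. -/
noncomputable def lfun (f : ι → ℝ) : (ι → ℝ) →L[ℝ] ℝ :=
  ∑ v : ι, f v • (ContinuousLinearMap.proj v : (ι → ℝ) →L[ℝ] ℝ)

lemma lfun_apply (f x : ι → ℝ) : lfun f x = ∑ v : ι, f v * x v := by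
  simp [lfun, ContinuousLinearMap.sum_apply]

lemma lfun_esub (f : ι → ℝ) (i j : ι) : lfun f (esub i j) = f i - f j := by
  simp only [lfun_apply, esub, mul_sub, Finset.sum_sub_distrib]
  rw [Finset.sum_eq_single i (fun b _ hb => by simp [hb]) (by simp),
    Finset.sum_eq_single j (fun b _ hb => by simp [hb]) (by simp)]
  simp

/-- sum-of-coordinates functional -/
noncomputable def sumCoord : (ι → ℝ) →L[ℝ] ℝ :=
  ∑ v : ι, (ContinuousLinearMap.proj v : (ι → ℝ) →L[ℝ] ℝ)

lemma sumCoord_apply (x : ι → ℝ) : sumCoord x = ∑ v : ι, x v := by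
  simp [sumCoord, ContinuousLinearMap.sum_apply]

lemma sumCoord_esub (i j : ι) : sumCoord (esub (ι := ι) i j) = 0 := by
  simp [sumCoord_apply, esub, Finset.sum_sub_distrib]

lemma esub_neg (i j : ι) : esub i j = -esub j i := by
  funext k
  simp only [esub, Pi.neg_apply]
  ring

lemma neg_mem_vset {K : SimpleGraph ι} {x} (hx : x ∈ vset K) : -x ∈ vset K := by
  obtain ⟨i, j, hadj, rfl⟩ := hx
  exact ⟨j, i, hadj.symm, by rw [esub_neg j i]⟩

lemma zero_mem_hull {K : SimpleGraph ι} (hne : (vset K).Nonempty) :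
    (0 : ι → ℝ) ∈ convexHull ℝ (vset K) := by
  obtain ⟨x, hx⟩ := hne
  have h1 : x ∈ convexHull ℝ (vset K) := subset_convexHull ℝ _ hx
  have h2 : -x ∈ convexHull ℝ (vset K) := subset_convexHull ℝ _ (neg_mem_vset hx)
  have := (convex_convexHull ℝ (vset K)) h1 h2 (by norm_num : (0:ℝ) ≤ 1/2)
    (by norm_num : (0:ℝ) ≤ 1/2) (by norm_num)
  simpa using this

lemma vset_finite (K : SimpleGraph ι) : (vset K).Finite := by
  have : vset K ⊆ (fun p : ι × ι => esub p.1 p.2) '' Set.univ := by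
    rintro x ⟨i, j, _, rfl⟩
    exact ⟨(i, j), Set.mem_univ _, rfl⟩
  exact Set.Finite.subset (Set.Finite.image _ Set.finite_univ) this

/-- points of P are in the hyperplane sum = 0 -/
lemma sumCoord_eq_zero {K : SimpleGraph ι} : ∀ x ∈ convexHull ℝ (vset K), sumCoord x = 0 := by
  apply hull_eq_const
  rintro s ⟨i, j, _, rfl⟩
  exact sumCoord_esub i j

end Defs
section Susp
variable {W : Type*} [Fintype W] [DecidableEq W]

/-- facet-defining functionals of the symmetric edge polytope of a suspension -/
def Valid (H : SimpleGraph W) (f : Option W → ℝ) : Prop :=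
  f none = 0 ∧
  (∀ v : W, f (some v) = 1 ∨ f (some v) = 0 ∨ f (some v) = -1) ∧
  (∀ u v : W, H.Adj u v → |f (some u) - f (some v)| ≤ 1) ∧
  (∀ v : W, f (some v) = 0 → ∃ u : W, H.Adj u v ∧ f (some u) ≠ 0) ∧
  (∃ v : W, f (some v) ≠ 0)

variable {H : SimpleGraph W} {f : Option W → ℝ}

lemma susp_adj_some_none (u : W) : (suspension H).Adj (some u) none := trivial
lemma susp_adj_none_some (u : W) : (suspension H).Adj none (some u) := trivial
lemma susp_adj_some_some {u v : W} (h : H.Adj u v) : (suspension H).Adj (some u) (some v) := h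

def tset (H : SimpleGraph W) (f : Option W → ℝ) : Set (Option W → ℝ) :=
  {x ∈ vset (suspension H) | lfun f x = 1}

/-- the face cut out by a valid functional -/
def Fface (H : SimpleGraph W) (f : Option W → ℝ) : Set (Option W → ℝ) :=
  convexHull ℝ (tset H f)

lemma valid_le_one (hf : Valid H f) : ∀ x ∈ vset (suspension H), lfun f x ≤ 1 := by
  rintro x ⟨i, j, hadj, rfl⟩
  rw [lfun_esub]
  match i, j with
  | some u, some v =>
      have := hf.2.2.1 u v hadj
      rw [abs_le] at this; exact this.2
  | some u, none => rw [hf.1]; rcases hf.2.1 u with h|h|h <;> rw [h] <;> norm_num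
  | none, some v => rw [hf.1]; rcases hf.2.1 v with h|h|h <;> rw [h] <;> norm_num
  | none, none => exact hadj.elim

lemma valid_exists_tight (hf : Valid H f) : ∃ x ∈ vset (suspension H), lfun f x = 1 := by
  obtain ⟨v, hv⟩ := hf.2.2.2.2
  rcases hf.2.1 v with h|h|h
  · exact ⟨esub (some v) none, ⟨some v, none, susp_adj_some_none v, rfl⟩,
      by rw [lfun_esub, h, hf.1]; ring⟩
  · exact absurd h hv
  · exact ⟨esub none (some v), ⟨none, some v, susp_adj_none_some v, rfl⟩,
      by rw [lfun_esub, h, hf.1]; ring⟩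

lemma valid_face_eq (hf : Valid H f) :
    {x ∈ convexHull ℝ (vset (suspension H)) |
      ∀ y ∈ convexHull ℝ (vset (suspension H)), lfun f y ≤ lfun f x} = Fface H f :=
  face_hull_eq (valid_le_one hf) (valid_exists_tight hf)

lemma fface_nonempty (hf : Valid H f) : (Fface H f).Nonempty := by
  obtain ⟨x, hx⟩ := valid_exists_tight hf
  exact ⟨x, subset_convexHull ℝ _ ⟨hx.1, hx.2⟩⟩

lemma fface_one (x : Option W → ℝ) (hx : x ∈ Fface H f) : lfun f x = 1 :=
  hull_eq_const (fun s hs => hs.2) x hx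

lemma fface_exposed (hf : Valid H f) :
    IsExposed ℝ (convexHull ℝ (vset (suspension H))) (Fface H f) :=
  fun _ => ⟨lfun f, (valid_face_eq hf).symm⟩

lemma fface_subset (hf : Valid H f) : Fface H f ⊆ convexHull ℝ (vset (suspension H)) :=
  convexHull_mono (Set.sep_subset _ _)

lemma fface_ne (hf : Valid H f) : Fface H f ≠ convexHull ℝ (vset (suspension H)) := by
  obtain ⟨x, hxv, hx1⟩ := valid_exists_tight hf
  intro heq
  have hxm : -x ∈ vset (suspension H) := neg_mem_vset hxv
  have : -x ∈ Fface H f := heq ▸ subset_convexHull ℝ _ hxm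
  have h2 := fface_one _ this
  rw [map_neg, hx1] at h2
  norm_num at h2

lemma single_sub (i j : Option W) : esub i j = Pi.single i 1 - Pi.single j 1 := by
  funext k
  simp [esub, Pi.single_apply]

lemma cmap_esub (g : (Option W → ℝ) →L[ℝ] ℝ) (i j : Option W) :
    g (esub i j) = g (Pi.single i 1) - g (Pi.single j 1) := by
  rw [single_sub, map_sub]

end Susp
section Max
variable {W : Type*} [Fintype W] [DecidableEq W] {H : SimpleGraph W} {f : Option W → ℝ}

lemma fface_max (hf : Valid H f) {F' : Set (Option W → ℝ)}
    (hexp : IsExposed ℝ (convexHull ℝ (vset (suspension H))) F')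
    (hne : F' ≠ convexHull ℝ (vset (suspension H)))
    (hsub : Fface H f ⊆ F') : F' = Fface H f := by
  have hF'ne : F'.Nonempty := (fface_nonempty hf).mono hsub
  obtain ⟨g, hg⟩ := hexp hF'ne
  obtain ⟨x₀, hx₀⟩ := hF'ne
  have hx₀' : x₀ ∈ convexHull ℝ (vset (suspension H)) ∧
      ∀ y ∈ convexHull ℝ (vset (suspension H)), g y ≤ g x₀ := by
    rw [hg] at hx₀; exact hx₀
  obtain ⟨v₁, hv₁⟩ := hf.2.2.2.2
  have hvne : (vset (suspension H)).Nonempty :=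
    ⟨esub none (some v₁), none, some v₁, susp_adj_none_some v₁, rfl⟩
  have hM0 : 0 ≤ g x₀ := by
    have h0 : (0 : Option W → ℝ) ∈ convexHull ℝ (vset (suspension H)) := zero_mem_hull hvne
    simpa using hx₀'.2 0 h0
  have htight : ∀ x ∈ tset H f, g x = g x₀ := by
    intro x hx
    have hxF : x ∈ F' := hsub (subset_convexHull ℝ _ hx)
    rw [hg] at hxF
    exact le_antisymm (hx₀'.2 x (subset_convexHull ℝ _ hx.1)) (hxF.2 x₀ hx₀'.1)
  have hMpos : 0 < g x₀ := by
    rcases lt_or_eq_of_le hM0 with h | h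
    · exact h
    · exfalso; apply hne
      rw [hg]
      have hg0 : ∀ y ∈ convexHull ℝ (vset (suspension H)), g y = 0 := by
        apply hull_eq_const
        intro s hs
        have h1 : g s ≤ g x₀ := hx₀'.2 s (subset_convexHull ℝ _ hs)
        have h2 : g (-s) ≤ g x₀ := hx₀'.2 _ (subset_convexHull ℝ _ (neg_mem_vset hs))
        rw [map_neg] at h2
        linarith
      ext x
      simp only [Set.mem_setOf_eq]
      exact ⟨fun hx => hx.1, fun hx => ⟨hx, fun y hy => by rw [hg0 y hy, hg0 x hx]⟩⟩
  have htightv : ∀ i j, (suspension H).Adj i j → f i - f j = 1 →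
      g (Pi.single i 1) - g (Pi.single j 1) = g x₀ := by
    intro i j hadj h1
    have hmem : esub i j ∈ tset H f := ⟨⟨i, j, hadj, rfl⟩, by rw [lfun_esub]; exact h1⟩
    have := htight _ hmem
    rwa [cmap_esub] at this
  have hkey : ∀ i, g (Pi.single i 1) = g x₀ * f i + g (Pi.single (none : Option W) 1) := by
    intro i
    cases i with
    | none => rw [hf.1]; ring
    | some v =>
      rcases hf.2.1 v with h|h|h
      · have h2 := htightv (some v) none (susp_adj_some_none v) (by rw [h, hf.1]; ring)
        rw [h]; linarith
      · obtain ⟨u, hadj, hu⟩ := hf.2.2.2.1 v h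
        rcases hf.2.1 u with h'|h'|h'
        · have e1 := htightv (some u) (some v) (susp_adj_some_some hadj) (by rw [h, h']; ring)
          have e2 := htightv (some u) none (susp_adj_some_none u) (by rw [h', hf.1]; ring)
          rw [h]; linarith
        · exact absurd h' hu
        · have e1 := htightv (some v) (some u) (susp_adj_some_some hadj.symm) (by rw [h, h']; ring)
          have e2 := htightv none (some u) (susp_adj_none_some u) (by rw [h', hf.1]; ring)
          rw [h]; linarith
      · have h2 := htightv none (some v) (susp_adj_none_some v) (by rw [h, hf.1]; ring)
        rw [h]; linarith
  have hgP : ∀ x ∈ convexHull ℝ (vset (suspension H)),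
      g x = g x₀ * lfun f x + g (Pi.single (none : Option W) 1) * sumCoord x := by
    set L : (Option W → ℝ) →L[ℝ] ℝ :=
      g - (g x₀ • lfun f + g (Pi.single (none : Option W) 1) • sumCoord) with hL
    have hzero : ∀ x ∈ convexHull ℝ (vset (suspension H)), L x = 0 := by
      apply hull_eq_const
      rintro s ⟨i, j, hadj, rfl⟩
      rw [hL]
      simp only [ContinuousLinearMap.sub_apply, ContinuousLinearMap.add_apply,
        ContinuousLinearMap.smul_apply, smul_eq_mul]
      rw [cmap_esub, lfun_esub, sumCoord_esub, hkey i, hkey j]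
      ring
    intro x hx
    have h2 := hzero x hx
    rw [hL] at h2
    simp only [ContinuousLinearMap.sub_apply, ContinuousLinearMap.add_apply,
      ContinuousLinearMap.smul_apply, smul_eq_mul] at h2
    linarith
  refine Set.Subset.antisymm ?_ hsub
  rw [← valid_face_eq hf]
  intro x hx
  rw [hg] at hx
  refine ⟨hx.1, fun y hy => ?_⟩
  have h1 := hx.2 y hy
  rw [hgP x hx.1, hgP y hy, sumCoord_eq_zero x hx.1, sumCoord_eq_zero y hy] at h1
  exact (mul_le_mul_iff_right₀ hMpos).1 (by linarith)

theorem valid_isFacet (hf : Valid H f) :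
    IsFacet (symEdgePolytope (suspension H)) (Fface H f) :=
  ⟨fface_exposed hf, fface_ne hf, fun _ h1 h2 h3 => fface_max hf h1 h2 h3⟩

end Max
section CeilAux

lemma ceil_half_le {a b : ℝ} (h : a - b ≤ 1) : (⌈a - 1/2⌉ : ℤ) ≤ ⌈b - 1/2⌉ + 1 := by
  rw [← Int.ceil_add_one]
  exact Int.ceil_mono (by linarith)

lemma ceil_half_eq {a b : ℝ} (h : a - b = 1) : (⌈a - 1/2⌉ : ℤ) = ⌈b - 1/2⌉ + 1 := by
  rw [← Int.ceil_add_one]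
  congr 1
  linarith

lemma ceil_val_aux {q : ℝ} (h1 : -1 ≤ q) (h2 : q ≤ 1) :
    ((⌈q - 1/2⌉ : ℤ) : ℝ) = 1 ∨ ((⌈q - 1/2⌉ : ℤ) : ℝ) = 0 ∨ ((⌈q - 1/2⌉ : ℤ) : ℝ) = -1 := by
  have hu : (⌈q - 1/2⌉ : ℤ) ≤ 1 := Int.ceil_le.2 (by push_cast; linarith)
  have hl : (-2 : ℤ) < ⌈q - 1/2⌉ := Int.lt_ceil.2 (by push_cast; linarith)
  have h : (⌈q - 1/2⌉ : ℤ) = 1 ∨ (⌈q - 1/2⌉ : ℤ) = 0 ∨ (⌈q - 1/2⌉ : ℤ) = -1 := by omega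
  rcases h with h|h|h <;> rw [h] <;> norm_num

lemma ceil_neg_half : (⌈(-(1/2) : ℝ)⌉ : ℤ) = 0 := by
  rw [Int.ceil_eq_zero_iff]
  constructor <;> norm_num

end CeilAux

section Surj
variable {W : Type*} [Fintype W] [DecidableEq W] [Nonempty W] {H : SimpleGraph W}

lemma susp_adj_elim {u v : W} (h : (suspension H).Adj (some u) (some v)) : H.Adj u v := h

lemma valid_one : Valid H (fun i => Option.elim i 0 (fun _ => (1:ℝ))) := by
  refine ⟨rfl, fun v => Or.inl rfl, fun u v _ => by norm_num,
    fun v hv => absurd hv one_ne_zero, ?_⟩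
  obtain ⟨v⟩ := ‹Nonempty W›
  exact ⟨v, one_ne_zero⟩

/-- a pre-valid functional: right values, edge constraints, tight on `F ∩ vset`. -/
def Pre (H : SimpleGraph W) (F : Set (Option W → ℝ)) (f : Option W → ℝ) : Prop :=
  f none = 0 ∧
  (∀ v : W, f (some v) = 1 ∨ f (some v) = 0 ∨ f (some v) = -1) ∧
  (∀ u v : W, H.Adj u v → |f (some u) - f (some v)| ≤ 1) ∧
  (∀ x ∈ vset (suspension H), x ∈ F → lfun f x = 1)

lemma repair (F : Set (Option W → ℝ)) :
    ∀ (k : ℕ) (f : Option W → ℝ), Pre H F f →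
      ((Finset.univ.filter (fun v : W => f (some v) = 0)).card ≤ k) →
      (∃ v : W, f (some v) ≠ 0) →
      ∃ f', Valid H f' ∧ ∀ x ∈ vset (suspension H), x ∈ F → lfun f' x = 1 := by
  intro k
  induction k with
  | zero =>
    intro f hf hcard hnz
    refine ⟨f, ⟨hf.1, hf.2.1, hf.2.2.1, fun v hv => ?_, hnz⟩, hf.2.2.2⟩
    exfalso
    have hmem : v ∈ Finset.univ.filter (fun v : W => f (some v) = 0) := by
      simp [hv]
    have := Finset.card_pos.2 ⟨v, hmem⟩
    omega
  | succ k ih =>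
    intro f hf hcard hnz
    by_cases hstar : ∀ v : W, f (some v) = 0 → ∃ u : W, H.Adj u v ∧ f (some u) ≠ 0
    · exact ⟨f, ⟨hf.1, hf.2.1, hf.2.2.1, hstar, hnz⟩, hf.2.2.2⟩
    · push_neg at hstar
      obtain ⟨v₀, hv₀z, hv₀n⟩ := hstar
      set f'' := Function.update f (some v₀) (1:ℝ) with hf''def
      have hne_app : ∀ i : Option W, i ≠ some v₀ → f'' i = f i :=
        fun i hi => Function.update_of_ne hi _ _
      have happ : f'' (some v₀) = 1 := Function.update_self _ _ _
      have hnone : f'' none = 0 := by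
        rw [hne_app none (by simp)]; exact hf.1
      have hvals : ∀ v : W, f'' (some v) = 1 ∨ f'' (some v) = 0 ∨ f'' (some v) = -1 := by
        intro v
        by_cases hv : v = v₀
        · subst hv; rw [happ]; exact Or.inl rfl
        · rw [hne_app (some v) (by simp [hv])]; exact hf.2.1 v
      have hedge : ∀ u v : W, H.Adj u v → |f'' (some u) - f'' (some v)| ≤ 1 := by
        intro u v hadj
        by_cases hu : u = v₀
        · rw [hu] at hadj ⊢
          have hv : v ≠ v₀ := fun h => H.loopless.irrefl v₀ (h ▸ hadj)
          rw [happ, hne_app (some v) (by simp [hv]), hv₀n v hadj.symm]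
          norm_num
        · by_cases hv : v = v₀
          · rw [hv] at hadj ⊢
            have hu' : u ≠ v₀ := fun h => H.loopless.irrefl v₀ (h ▸ hadj)
            rw [happ, hne_app (some u) (by simp [hu']), hv₀n u hadj]
            norm_num
          · rw [hne_app (some u) (by simp [hu]), hne_app (some v) (by simp [hv])]
            exact hf.2.2.1 u v hadj
      have htav : ∀ x ∈ vset (suspension H), x ∈ F → lfun f'' x = 1 := by
        rintro x ⟨i, j, hadj, rfl⟩ hxF
        have h1 : f i - f j = 1 := by
          have := hf.2.2.2 _ ⟨i, j, hadj, rfl⟩ hxF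
          rwa [lfun_esub] at this
        have hi : i ≠ some v₀ := by
          rintro rfl
          match j, hadj with
          | none, _ => rw [hv₀z, hf.1] at h1; norm_num at h1
          | some u, hadj =>
            have hu0 : f (some u) = 0 := hv₀n u (susp_adj_elim hadj).symm
            rw [hv₀z, hu0] at h1; norm_num at h1
        have hj : j ≠ some v₀ := by
          rintro rfl
          match i, hadj with
          | none, _ => rw [hv₀z, hf.1] at h1; norm_num at h1
          | some u, hadj =>
            have hu0 : f (some u) = 0 := hv₀n u (susp_adj_elim hadj)
            rw [hv₀z, hu0] at h1; norm_num at h1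
        rw [lfun_esub, hne_app i hi, hne_app j hj]
        exact h1
      have hcard' : (Finset.univ.filter (fun v : W => f'' (some v) = 0)).card ≤ k := by
        have hsub2 : Finset.univ.filter (fun v : W => f'' (some v) = 0) ⊆
            (Finset.univ.filter (fun v : W => f (some v) = 0)).erase v₀ := by
          intro v hvmem
          rw [Finset.mem_filter] at hvmem
          have hvne : v ≠ v₀ := by
            rintro rfl
            rw [happ] at hvmem
            norm_num at hvmem
          refine Finset.mem_erase.2 ⟨hvne, Finset.mem_filter.2 ⟨Finset.mem_univ v, ?_⟩⟩
          rw [← hne_app (some v) (by simp [hvne])]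
          exact hvmem.2
        have hv₀mem : v₀ ∈ Finset.univ.filter (fun v : W => f (some v) = 0) := by
          simp [hv₀z]
        have := Finset.card_le_card hsub2
        rw [Finset.card_erase_of_mem hv₀mem] at this
        omega
      exact ih f'' ⟨hnone, hvals, hedge, htav⟩ hcard' ⟨v₀, by rw [happ]; norm_num⟩

end Surj
section Surj2
variable {W : Type*} [Fintype W] [DecidableEq W] [Nonempty W] {H : SimpleGraph W}

theorem facet_exists_valid {F : Set (Option W → ℝ)}
    (hF : IsFacet (symEdgePolytope (suspension H)) F) :
    ∃ f, Valid H f ∧ F = Fface H f := by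
  have hP : symEdgePolytope (suspension H) = convexHull ℝ (vset (suspension H)) := rfl
  rw [hP] at hF
  -- F is nonempty
  have hFne : F.Nonempty := by
    by_contra hcon
    rw [Set.not_nonempty_iff_eq_empty] at hcon
    have h1 := hF.2.2 (Fface H (fun i => Option.elim i 0 (fun _ => (1:ℝ))))
      (fface_exposed valid_one) (fface_ne valid_one) (hcon ▸ Set.empty_subset _)
    exact (fface_nonempty valid_one).ne_empty (h1.trans hcon)
  obtain ⟨g, hg⟩ := hF.1 hFne
  obtain ⟨x₀, hx₀⟩ := hFne
  have hx₀m : x₀ ∈ convexHull ℝ (vset (suspension H)) ∧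
      ∀ y ∈ convexHull ℝ (vset (suspension H)), g y ≤ g x₀ := by
    rw [hg] at hx₀; exact hx₀
  obtain ⟨v₁⟩ := ‹Nonempty W›
  have hvne : (vset (suspension H)).Nonempty :=
    ⟨esub none (some v₁), none, some v₁, susp_adj_none_some v₁, rfl⟩
  have hub : ∀ s ∈ vset (suspension H), g s ≤ g x₀ :=
    fun s hs => hx₀m.2 s (subset_convexHull ℝ _ hs)
  have hM0 : 0 ≤ g x₀ := by simpa using hx₀m.2 0 (zero_mem_hull hvne)
  have hMpos : 0 < g x₀ := by
    rcases lt_or_eq_of_le hM0 with h | h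
    · exact h
    · exfalso; apply hF.2.1
      rw [hg]
      have hg0 : ∀ y ∈ convexHull ℝ (vset (suspension H)), g y = 0 := by
        apply hull_eq_const
        intro s hs
        have h1 : g s ≤ g x₀ := hub s hs
        have h2 : g (-s) ≤ g x₀ := hub _ (neg_mem_vset hs)
        rw [map_neg] at h2
        linarith
      ext x
      simp only [Set.mem_setOf_eq]
      exact ⟨fun hx => hx.1, fun hx => ⟨hx, fun y hy => by rw [hg0 y hy, hg0 x hx]⟩⟩
  -- the maximum is attained on a vertex
  have hmemM : ∃ s ∈ vset (suspension H), g s = g x₀ := by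
    by_contra hcon
    push_neg at hcon
    obtain ⟨b, hbmem, hbmax⟩ := Set.exists_max_image (vset (suspension H)) g
      (vset_finite _) hvne
    have hblt : g b < g x₀ := lt_of_le_of_ne (hub b hbmem) (hcon b hbmem)
    have hle := hull_le hbmax x₀ hx₀m.1
    linarith
  have hFhull : F = convexHull ℝ {s ∈ vset (suspension H) | g s = g x₀} := by
    rw [hg]; exact face_hull_eq hub hmemM
  -- g-bounds on basis differences
  have hB : ∀ i j : Option W, (suspension H).Adj i j →
      g (Pi.single i 1) - g (Pi.single j 1) ≤ g x₀ := by
    intro i j hadj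
    have := hub _ ⟨i, j, hadj, rfl⟩
    rwa [cmap_esub] at this
  -- the rounded functional
  set q : Option W → ℝ :=
    fun i => (g (Pi.single i 1) - g (Pi.single (none : Option W) 1)) / g x₀ with hq
  set fc : Option W → ℝ := fun i => ((⌈q i - 1/2⌉ : ℤ) : ℝ) with hfc
  have hq_none : q none = 0 := by rw [hq]; simp
  have hq_bounds : ∀ i : Option W, -1 ≤ q i ∧ q i ≤ 1 := by
    intro i
    cases i with
    | none => rw [hq_none]; norm_num
    | some v =>
      constructor
      · have := hB none (some v) (susp_adj_none_some v)
        rw [hq]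
        rw [le_div_iff₀ hMpos]
        linarith
      · have := hB (some v) none (susp_adj_some_none v)
        rw [hq, div_le_one hMpos]
        linarith
  have hfc_none : fc none = 0 := by
    rw [hfc]
    simp only [hq_none]
    norm_num [ceil_neg_half]
  have hfc_vals : ∀ i : Option W, fc i = 1 ∨ fc i = 0 ∨ fc i = -1 := by
    intro i
    rw [hfc]
    exact ceil_val_aux (hq_bounds i).1 (hq_bounds i).2
  have hq_step : ∀ i j : Option W, (suspension H).Adj i j → q i - q j ≤ 1 := by
    intro i j hadj
    have := hB i j hadj
    rw [hq, div_sub_div_same, div_le_one hMpos]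
    linarith
  have hfc_edge : ∀ u v : W, H.Adj u v → |fc (some u) - fc (some v)| ≤ 1 := by
    intro u v hadj
    have h1 := ceil_half_le (hq_step (some u) (some v) (susp_adj_some_some hadj))
    have h2 := ceil_half_le (hq_step (some v) (some u) (susp_adj_some_some hadj.symm))
    have h1' : ((⌈q (some u) - 1/2⌉ : ℤ) : ℝ) ≤ ((⌈q (some v) - 1/2⌉ : ℤ) : ℝ) + 1 := by
      exact_mod_cast h1
    have h2' : ((⌈q (some v) - 1/2⌉ : ℤ) : ℝ) ≤ ((⌈q (some u) - 1/2⌉ : ℤ) : ℝ) + 1 := by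
      exact_mod_cast h2
    simp only [hfc, abs_le]
    constructor <;> linarith
  have hfc_tight : ∀ x ∈ vset (suspension H), x ∈ F → lfun fc x = 1 := by
    rintro x ⟨i, j, hadj, rfl⟩ hxF
    have hgx : g (esub i j) = g x₀ := by
      rw [hg] at hxF
      exact le_antisymm (hub _ ⟨i, j, hadj, rfl⟩) (hxF.2 x₀ hx₀m.1)
    have hqd : q i - q j = 1 := by
      rw [cmap_esub] at hgx
      rw [hq, div_sub_div_same]
      rw [div_eq_one_iff_eq hMpos.ne']
      linarith
    have := ceil_half_eq hqd
    rw [lfun_esub, hfc]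
    push_cast [this]
    ring
  -- a nonzero coordinate
  have hTne : {s ∈ vset (suspension H) | g s = g x₀}.Nonempty := by
    obtain ⟨s, hs1, hs2⟩ := hmemM; exact ⟨s, hs1, hs2⟩
  obtain ⟨s₀, hs₀v, hs₀M⟩ := hTne
  have hs₀F : s₀ ∈ F := by
    rw [hg]
    exact ⟨subset_convexHull ℝ _ hs₀v, fun y hy => hs₀M ▸ hx₀m.2 y hy⟩
  have hfc_nz : ∃ v : W, fc (some v) ≠ 0 := by
    obtain ⟨i, j, hadj, rfl⟩ := hs₀v
    have h1 : fc i - fc j = 1 := by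
      have := hfc_tight _ ⟨i, j, hadj, rfl⟩ hs₀F
      rwa [lfun_esub] at this
    match i, j with
    | none, none => exact hadj.elim
    | none, some u =>
      refine ⟨u, ?_⟩
      rw [hfc_none] at h1
      intro h0; rw [h0] at h1; norm_num at h1
    | some u, none =>
      refine ⟨u, ?_⟩
      rw [hfc_none] at h1
      intro h0; rw [h0] at h1; norm_num at h1
    | some u, some w =>
      by_cases h0 : fc (some u) = 0
      · refine ⟨w, ?_⟩
        rw [h0] at h1
        intro h0'; rw [h0'] at h1; norm_num at h1
      · exact ⟨u, h0⟩
  -- repair to a valid functional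
  obtain ⟨f', hf'valid, hf'tight⟩ := repair F (Fintype.card W) fc
    ⟨hfc_none, fun v => hfc_vals (some v), hfc_edge, hfc_tight⟩
    (le_trans (Finset.card_le_card (Finset.filter_subset _ _)) (by simp)) hfc_nz
  refine ⟨f', hf'valid, ?_⟩
  have hsubT : {s ∈ vset (suspension H) | g s = g x₀} ⊆ tset H f' := by
    rintro s ⟨hs1, hs2⟩
    refine ⟨hs1, hf'tight s hs1 ?_⟩
    rw [hg]
    exact ⟨subset_convexHull ℝ _ hs1, fun y hy => hs2 ▸ hx₀m.2 y hy⟩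
  have hFsub : F ⊆ Fface H f' := by
    rw [hFhull]
    exact convexHull_mono hsubT
  have := hF.2.2 (Fface H f') (fface_exposed hf'valid) (fface_ne hf'valid) hFsub
  exact this.symm

end Surj2
section Count
variable {W : Type*} [Fintype W] [DecidableEq W] [Nonempty W] {H : SimpleGraph W}

lemma facet_set_eq :
    {F : Set (Option W → ℝ) | IsFacet (symEdgePolytope (suspension H)) F}
      = Fface H '' {f | Valid H f} := by
  ext F
  simp only [Set.mem_setOf_eq, Set.mem_image]
  constructor
  · intro hF
    obtain ⟨f, hf, hFe⟩ := facet_exists_valid hF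
    exact ⟨f, hf, hFe.symm⟩
  · rintro ⟨f, hf, rfl⟩
    exact valid_isFacet hf

lemma mem_fface_iff_one {f : Option W → ℝ} (hf : Valid H f) (v : W) :
    f (some v) = 1 ↔ esub (some v) none ∈ Fface H f := by
  constructor
  · intro h1
    exact subset_convexHull ℝ _
      ⟨⟨some v, none, susp_adj_some_none v, rfl⟩, by rw [lfun_esub, h1, hf.1]; ring⟩
  · intro hmem
    have := fface_one _ hmem
    rw [lfun_esub, hf.1] at this
    linarith

lemma mem_fface_iff_negone {f : Option W → ℝ} (hf : Valid H f) (v : W) :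
    f (some v) = -1 ↔ esub none (some v) ∈ Fface H f := by
  constructor
  · intro h1
    exact subset_convexHull ℝ _
      ⟨⟨none, some v, susp_adj_none_some v, rfl⟩, by rw [lfun_esub, h1, hf.1]; ring⟩
  · intro hmem
    have := fface_one _ hmem
    rw [lfun_esub, hf.1] at this
    linarith

lemma fface_injOn : Set.InjOn (Fface H) {f | Valid H f} := by
  intro f hf f' hf' heq
  rw [Set.mem_setOf_eq] at hf hf'
  funext i
  cases i with
  | none => rw [hf.1, hf'.1]
  | some v =>
    rcases hf.2.1 v with h|h|h
    · rw [h]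
      symm
      rw [mem_fface_iff_one hf', ← heq, ← mem_fface_iff_one hf]
      exact h
    · rw [h]
      symm
      rcases hf'.2.1 v with h'|h'|h'
      · rw [mem_fface_iff_one hf', ← heq, ← mem_fface_iff_one hf] at h'
        rw [h'] at h; norm_num at h
      · exact h'
      · rw [mem_fface_iff_negone hf', ← heq, ← mem_fface_iff_negone hf] at h'
        rw [h'] at h; norm_num at h
    · rw [h]
      symm
      rw [mem_fface_iff_negone hf', ← heq, ← mem_fface_iff_negone hf]
      exact h

theorem numFacets_susp :
    numFacets (symEdgePolytope (suspension H)) = {f : Option W → ℝ | Valid H f}.ncard := by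
  rw [numFacets, facet_set_eq, Set.ncard_image_of_injOn fface_injOn]

end Count
section Final
variable {V : Type*} [Fintype V] [DecidableEq V]

/-- lift a functional on `Option V` to `Option (Option V)` with value `0` at the new apex -/
def liftF : (Option V → ℝ) → (Option (Option V) → ℝ) := fun f i => Option.elim i 0 f

lemma liftF_inj : Function.Injective (liftF (V := V)) := by
  intro f g h
  funext w
  exact congrFun h (some w)

/-- the functionals coming from a sign vector, with apex value `c` -/
def bmap (c : ℝ) : (V → Bool) → (Option (Option V) → ℝ) := fun s i =>
  match i with
  | none => 0
  | some none => c
  | some (some v) => if s v then c else 0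

lemma bmap_inj {c : ℝ} (hc : c ≠ 0) : Function.Injective (bmap (V := V) c) := by
  intro s s' h
  funext v
  have := congrFun h (some (some v))
  simp only [bmap] at this
  cases hs : s v <;> cases hs' : s' v <;> rw [hs, hs'] at this <;> simp_all

lemma validSet_finite {W : Type*} [Fintype W] [DecidableEq W] (H : SimpleGraph W) :
    {f : Option W → ℝ | Valid H f}.Finite := by
  apply Set.Finite.subset (Set.Finite.pi (t := fun _ : Option W => ({1, 0, -1} : Set ℝ))
    (fun _ => (Set.finite_singleton (-1)).insert 0 |>.insert 1))
  intro f hf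
  rw [Set.mem_setOf_eq] at hf
  rw [Set.mem_pi]
  intro i _
  cases i with
  | none => rw [hf.1]; simp
  | some v => rcases hf.2.1 v with h|h|h <;> rw [h] <;> simp

variable {G : SimpleGraph V}

lemma bmap_valid {c : ℝ} (hc : c = 1 ∨ c = -1) (s : V → Bool) :
    Valid (suspension G) (bmap c s) ∧ bmap c s (some none) = c := by
  have hc0 : c ≠ 0 := by rcases hc with rfl|rfl <;> norm_num
  have hval : ∀ w : Option V, bmap c s (some w) = c ∨ bmap c s (some w) = 0 := by
    intro w
    cases w with
    | none => exact Or.inl rfl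
    | some v =>
      simp only [bmap]
      cases s v <;> simp
  refine ⟨⟨rfl, ?_, ?_, ?_, ⟨none, hc0⟩⟩, rfl⟩
  · intro w
    rcases hval w with h|h <;> rw [h]
    · rcases hc with rfl|rfl
      · exact Or.inl rfl
      · exact Or.inr (Or.inr rfl)
    · exact Or.inr (Or.inl rfl)
  · intro u v _
    rcases hval u with h|h <;> rcases hval v with h'|h' <;> rw [h, h'] <;>
      rcases hc with rfl|rfl <;> norm_num
  · intro w hw
    cases w with
    | none => exact absurd hw hc0
    | some v => exact ⟨none, trivial, hc0⟩

lemma liftF_valid {f : Option V → ℝ} (hf : Valid G f) :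
    Valid (suspension G) (liftF f) ∧ liftF f (some none) = 0 := by
  obtain ⟨v₁, hv₁⟩ := hf.2.2.2.2
  refine ⟨⟨rfl, ?_, ?_, ?_, ⟨some v₁, hv₁⟩⟩, hf.1⟩
  · intro w
    cases w with
    | none => exact Or.inr (Or.inl hf.1)
    | some v => exact hf.2.1 v
  · intro u v hadj
    match u, v, hadj with
    | none, none, hadj => exact hadj.elim
    | none, some v, _ =>
      show |f none - f (some v)| ≤ 1
      rw [hf.1]
      rcases hf.2.1 v with h|h|h <;> rw [h] <;> norm_num
    | some u, none, _ =>
      show |f (some u) - f none| ≤ 1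
      rw [hf.1]
      rcases hf.2.1 u with h|h|h <;> rw [h] <;> norm_num
    | some u, some v, hadj => exact hf.2.2.1 u v hadj
  · intro w hw
    cases w with
    | none => exact ⟨some v₁, trivial, hv₁⟩
    | some v =>
      obtain ⟨u, hadj, hu⟩ := hf.2.2.2.1 v hw
      exact ⟨some u, hadj, hu⟩

lemma valid_case_zero {f : Option (Option V) → ℝ} (hf : Valid (suspension G) f)
    (h0 : f (some none) = 0) : ∃ f₀, Valid G f₀ ∧ liftF f₀ = f := by
  refine ⟨fun w => f (some w), ⟨h0, fun v => hf.2.1 (some v), ?_, ?_, ?_⟩, ?_⟩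
  · intro u v hadj
    exact hf.2.2.1 (some u) (some v) hadj
  · intro v hv
    obtain ⟨u, hadj, hu⟩ := hf.2.2.2.1 (some v) hv
    match u, hadj with
    | none, _ => exact absurd h0 hu
    | some u', hadj => exact ⟨u', hadj, hu⟩
  · obtain ⟨u, hadj, hu⟩ := hf.2.2.2.1 none h0
    match u, hadj with
    | some v, _ => exact ⟨v, hu⟩
  · funext i
    cases i with
    | none => exact hf.1.symm
    | some w => rfl

lemma valid_case_c {f : Option (Option V) → ℝ} {c : ℝ} (hf : Valid (suspension G) f)
    (hc : c = 1 ∨ c = -1) (h0 : f (some none) = c) : ∃ s : V → Bool, bmap c s = f := by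
  classical
  have key : ∀ v : V, f (some (some v)) = c ∨ f (some (some v)) = 0 := by
    intro v
    have hadj : (suspension G).Adj none (some v) := trivial
    have hedge := hf.2.2.1 none (some v) hadj
    rw [h0, abs_le] at hedge
    rcases hf.2.1 (some v) with h|h|h <;> rcases hc with rfl|rfl <;>
      rw [h] <;> rw [h] at hedge <;> first
        | exact Or.inl rfl
        | exact Or.inr rfl
        | (exfalso; norm_num at hedge)
  refine ⟨fun v => decide (f (some (some v)) = c), ?_⟩
  funext i
  match i with
  | none => exact hf.1.symm
  | some none => exact h0.symm
  | some (some v) =>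
    simp only [bmap]
    by_cases hfv : f (some (some v)) = c
    · simp [hfv]
    · rcases key v with h|h
      · exact absurd h hfv
      · rw [if_neg (by simpa using hfv)]
        exact h.symm

theorem count_valid (G : SimpleGraph V) :
    {f : Option (Option V) → ℝ | Valid (suspension G) f}.ncard
      = {f : Option V → ℝ | Valid G f}.ncard + 2 ^ (Fintype.card V + 1) := by
  classical
  have hc1 : (1 : ℝ) = 1 ∨ (1 : ℝ) = -1 := Or.inl rfl
  have hcm : (-1 : ℝ) = 1 ∨ (-1 : ℝ) = -1 := Or.inr rfl
  set A := {f : Option (Option V) → ℝ | Valid (suspension G) f ∧ f (some none) = 0} with hA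
  set B := {f : Option (Option V) → ℝ | Valid (suspension G) f ∧ f (some none) = 1} with hB
  set C := {f : Option (Option V) → ℝ | Valid (suspension G) f ∧ f (some none) = -1} with hC
  have hAeq : A = liftF '' {f : Option V → ℝ | Valid G f} := by
    ext f
    constructor
    · rintro ⟨hf, h0⟩
      obtain ⟨f₀, hf₀, hlift⟩ := valid_case_zero hf h0
      exact ⟨f₀, hf₀, hlift⟩
    · rintro ⟨f₀, hf₀, rfl⟩
      exact liftF_valid hf₀
  have hBeq : B = bmap 1 '' (Set.univ : Set (V → Bool)) := by
    ext f
    constructor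
    · rintro ⟨hf, h0⟩
      obtain ⟨s, hs⟩ := valid_case_c hf hc1 h0
      exact ⟨s, Set.mem_univ s, hs⟩
    · rintro ⟨s, -, rfl⟩
      exact bmap_valid hc1 s
  have hCeq : C = bmap (-1) '' (Set.univ : Set (V → Bool)) := by
    ext f
    constructor
    · rintro ⟨hf, h0⟩
      obtain ⟨s, hs⟩ := valid_case_c hf hcm h0
      exact ⟨s, Set.mem_univ s, hs⟩
    · rintro ⟨s, -, rfl⟩
      exact bmap_valid hcm s
  have hsubA : A ⊆ {f : Option (Option V) → ℝ | Valid (suspension G) f} := fun f hf => hf.1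
  have hsubB : B ⊆ {f : Option (Option V) → ℝ | Valid (suspension G) f} := fun f hf => hf.1
  have hsubC : C ⊆ {f : Option (Option V) → ℝ | Valid (suspension G) f} := fun f hf => hf.1
  have hfin := validSet_finite (suspension G)
  have hunion : {f : Option (Option V) → ℝ | Valid (suspension G) f} = (A ∪ B) ∪ C := by
    ext f
    constructor
    · intro hf
      rcases hf.2.1 none with h|h|h
      · exact Or.inl (Or.inr ⟨hf, h⟩)
      · exact Or.inl (Or.inl ⟨hf, h⟩)
      · exact Or.inr ⟨hf, h⟩
    · rintro ((h|h)|h) <;> exact h.1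
  have hdisAB : Disjoint A B := by
    rw [Set.disjoint_left]
    rintro f ⟨-, h0⟩ ⟨-, h1⟩
    rw [h0] at h1; norm_num at h1
  have hdisABC : Disjoint (A ∪ B) C := by
    rw [Set.disjoint_left]
    rintro f (⟨-, h0⟩|⟨-, h0⟩) ⟨-, h1⟩ <;> rw [h0] at h1 <;> norm_num at h1
  rw [hunion, Set.ncard_union_eq hdisABC (hfin.subset (hunion ▸ Set.subset_union_left))
      (hfin.subset hsubC),
    Set.ncard_union_eq hdisAB (hfin.subset hsubA) (hfin.subset hsubB)]
  rw [hAeq, hBeq, hCeq,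
    Set.ncard_image_of_injective _ liftF_inj,
    Set.ncard_image_of_injective _ (bmap_inj (by norm_num : (1:ℝ) ≠ 0)),
    Set.ncard_image_of_injective _ (bmap_inj (by norm_num : (-1:ℝ) ≠ 0)),
    Set.ncard_univ, Nat.card_eq_fintype_card, Fintype.card_fun, Fintype.card_bool]
  rw [pow_succ]
  ring

end Final


/-- Let `G` be a graph with `n - 1 ≥ 2` vertices. Then
`N(P_{(Ĝ)^}) = N(P_Ĝ) + 2^n`. -/
theorem numFacets_double_suspension {V : Type*} [Fintype V] [DecidableEq V]
    (G : SimpleGraph V) (hV : 2 ≤ Fintype.card V) :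
    numFacets (symEdgePolytope (suspension (suspension G))) =
      numFacets (symEdgePolytope (suspension G)) + 2 ^ (Fintype.card V + 1) := by
  have : Nonempty V := Fintype.card_pos_iff.1 (by omega)
  rw [numFacets_susp (H := suspension G), numFacets_susp (H := G)]
  exact count_valid G
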